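/- Let A be a unital alternative *-algebra over ℂ containing a nontrivial symmetric idempotent e satisfying conditions (♠) and (♣), and let Φ : A → A be a map satisfying the *-Jordan n-derivation identity in the last two slots. Then for each i ∈ {1,2} and all a_{ii}, b_{ii} ∈ A_{ii} one has Φ(a_{ii} + b_{ii}) = Φ(a_{ii}) + Φ(b_{ii}). -/

import Mathlib

/-- The Jordan `•`-product `a • b = ab + b a*`. -/
def starJordan {A : Type*} [NonAssocRing A] [StarRing A] (a b : A) : A :=
  a * b + b * star a

/-- Left-normed iterated Jordan `•`-product of a list (empty list ↦ 0, junk value). -/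
def leftStarJordan {A : Type*} [NonAssocRing A] [StarRing A] : List A → A
  | [] => 0
  | x :: xs => xs.foldl starJordan x

/-- The family `a₁ = ⋯ = a_{n-2} = 1`, `a_{n-1} = x`, `a_n = y`. -/
def lastTwoFamily {A : Type*} [One A] (n : ℕ) (x y : A) : Fin n → A :=
  fun i => if (i : ℕ) = n - 2 then x else if (i : ℕ) = n - 1 then y else 1

/-- `e₁ = e`, `e₂ = 1 - e`. -/
def peirceIdem {A : Type*} [NonAssocRing A] (e : A) : Fin 2 → A :=
  fun i => if i = 0 then e else 1 - e

/-- Membership in the Peirce component `A_{ij}`: `eᵢ x = x` and `x eⱼ = x`. -/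
def inPeirce {A : Type*} [NonAssocRing A] (e : A) (i j : Fin 2) (x : A) : Prop :=
  peirceIdem e i * x = x ∧ x * peirceIdem e j = x

/-- The inner derivation `Ξ_{y,z}(a) = y(za) − z(ya) + y(az) − (ya)z + (az)y − (ay)z`. -/
def innerDer {A : Type*} [NonAssocRing A] (y z a : A) : A :=
  y * (z * a) - z * (y * a) + y * (a * z) - (y * a) * z + (a * z) * y - (a * y) * z


set_option linter.unusedSectionVars false
namespace SJP

variable {A : Type*} [NonAssocRing A] [Module ℂ A] [StarRing A]

/-- torsion-freeness from the ℂ-module structure -/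
lemma tfN (k : ℕ) (hk : k ≠ 0) (z : A) (h : k • z = 0) : z = 0 := by
  have h2 : ((k : ℂ)) • z = 0 := by rw [Nat.cast_smul_eq_nsmul]; exact h
  have h3 := congrArg (fun w => ((k:ℂ))⁻¹ • w) h2
  simpa [smul_smul, inv_mul_cancel₀ (show (k:ℂ) ≠ 0 by exact_mod_cast hk)] using h3

lemma tf2 (z : A) (h : z + z = 0) : z = 0 := by
  refine tfN 2 (by norm_num) z ?_
  rw [two_nsmul]; exact h

/-- from `z + z = w + w` conclude `z = w` -/
lemma tf2' (z w : A) (h : z + z = w + w) : z = w := by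
  have h2 := tf2 (z - w) (by rw [sub_add_sub_comm, h, sub_self])
  exact sub_eq_zero.mp h2

/- ### starJordan basic lemmas -/

lemma sJ_add_right (x p q : A) : starJordan x (p + q) = starJordan x p + starJordan x q := by
  simp only [starJordan, mul_add, add_mul]; abel

lemma sJ_add_left (x x' y : A) : starJordan (x + x') y = starJordan x y + starJordan x' y := by
  simp only [starJordan, star_add, mul_add, add_mul]; abel

lemma sJ_zero_right (x : A) : starJordan x 0 = 0 := by simp [starJordan]

lemma sJ_zero_left (y : A) : starJordan 0 y = 0 := by simp [starJordan]

lemma sJ_sub_right (x p q : A) : starJordan x (p - q) = starJordan x p - starJordan x q := by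
  simp only [starJordan, mul_sub, sub_mul]; abel

lemma sJ_sub_left (x x' y : A) : starJordan (x - x') y = starJordan x y - starJordan x' y := by
  simp only [starJordan, star_sub, mul_sub, sub_mul]; abel

lemma sJ_nsmul_left (k : ℕ) (x y : A) : starJordan (k • x) y = k • starJordan x y := by
  simp only [starJordan, star_nsmul, smul_mul_assoc, mul_smul_comm, smul_add]

lemma sJ_one_right (x : A) : starJordan x 1 = x + star x := by simp [starJordan]

/- ### linearized alternative laws -/

section alt

lemma linL (halt₁ : ∀ a b : A, a * a * b = a * (a * b)) (a b c : A) : (a*b + b*a)*c = a*(b*c) + b*(a*c) := by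
  have h := halt₁ (a+b) c
  have ha := halt₁ a c
  have hb := halt₁ b c
  have h' : (a*b + b*a)*c - (a*(b*c) + b*(a*c)) =
      ((a+b)*(a+b)*c - (a+b)*((a+b)*c)) - (a*a*c - a*(a*c)) - (b*b*c - b*(b*c)) := by
    simp only [add_mul, mul_add]; abel
  rw [h, ha, hb] at h'
  simp only [sub_self, sub_zero, zero_sub, neg_zero] at h'
  exact sub_eq_zero.mp h'

lemma linR (halt₂ : ∀ a b : A, b * a * a = b * (a * a)) (a b c : A) : c*(a*b + b*a) = c*a*b + c*b*a := by
  have h := halt₂ (a+b) c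
  have ha := halt₂ a c
  have hb := halt₂ b c
  have h' : c*(a*b + b*a) - (c*a*b + c*b*a) =
      (c*((a+b)*(a+b)) - c*(a+b)*(a+b)) - (c*(a*a) - c*a*a) - (c*(b*b) - c*b*b) := by
    simp only [add_mul, mul_add]; abel
  rw [h, ha, hb] at h'
  simp only [sub_self, sub_zero, zero_sub, neg_zero] at h'
  exact sub_eq_zero.mp h'

lemma flex (halt₁ : ∀ a b : A, a * a * b = a * (a * b)) (halt₂ : ∀ a b : A, b * a * a = b * (a * a)) (a b : A) : (a*b)*a = a*(b*a) := by
  have h := linL halt₁ a b a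
  have h2 := halt₂ a b
  -- h : (a*b + b*a)*a = a*(b*a) + b*(a*a)
  rw [add_mul, ← h2] at h
  -- h : (a*b)*a + (b*a)*a = a*(b*a) + b*a*a
  exact add_right_cancel h

end alt

end SJP

section part2
variable {A : Type*} [NonAssocRing A] [Module ℂ A] [StarRing A]
variable (halt₁ : ∀ a b : A, a * a * b = a * (a * b))
variable (halt₂ : ∀ a b : A, b * a * a = b * (a * a))
variable (ε : A) (hεi : ε * ε = ε)

namespace SJP
include halt₁ halt₂ hεi

/-- P12 ⬝ P11 = 0 -/
lemma r3 {m x : A} (hm2 : m*ε = 0) (hx1 : ε*x = x) (hx2 : x*ε = x) : m*x = 0 := by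
  have h := linR halt₂ ε x m
  rw [hx1, hx2, hm2, zero_mul, zero_add, mul_add] at h
  -- h : m*x + m*x = m*x*ε
  have h3 : m*x*ε + m*x*ε = m*x*ε := by
    calc m*x*ε + m*x*ε = (m*x + m*x)*ε := by rw [add_mul]
    _ = (m*x*ε)*ε := by rw [h]
    _ = m*x*(ε*ε) := halt₂ ε (m*x)
    _ = m*x*ε := by rw [hεi]
  have h4 : m*x*ε = 0 := add_eq_left.mp h3
  exact tf2 _ (h.trans h4)

/-- P11 ⬝ P21 = 0 -/
lemma r4 {x v : A} (hx1 : ε*x = x) (hx2 : x*ε = x) (hv1 : ε*v = 0) : x*v = 0 := by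
  have h := linL halt₁ ε x v
  rw [hx1, hx2, hv1, mul_zero, add_zero, add_mul] at h
  -- h : x*v + x*v = ε*(x*v)
  have h3 : ε*(x*v) + ε*(x*v) = ε*(x*v) := by
    calc ε*(x*v) + ε*(x*v) = ε*(x*v + x*v) := by rw [mul_add]
    _ = ε*(ε*(x*v)) := by rw [h]
    _ = ε*ε*(x*v) := (halt₁ ε (x*v)).symm
    _ = ε*(x*v) := by rw [hεi]
  have h4 : ε*(x*v) = 0 := add_eq_left.mp h3
  exact tf2 _ (h.trans h4)

/-- P11 ⬝ P22 = 0 -/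
lemma r5 {x d : A} (hx2 : x*ε = x) (hd1 : ε*d = 0) (hd2 : d*ε = 0) : x*d = 0 := by
  have h := linR halt₂ ε d x
  rw [hd1, hd2, add_zero, mul_zero, hx2] at h
  -- h : 0 = x*d + x*d*ε
  have h2 : x*d*ε + x*d*ε = 0 := by
    calc x*d*ε + x*d*ε = x*d*ε + x*d*(ε*ε) := by rw [hεi]
    _ = x*d*ε + (x*d*ε)*ε := by rw [← halt₂ ε (x*d)]
    _ = (x*d + x*d*ε)*ε := by rw [add_mul]
    _ = 0*ε := by rw [← h]
    _ = 0 := zero_mul ε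
  have h3 : x*d*ε = 0 := tf2 _ h2
  rw [h3, add_zero] at h
  exact h.symm

/-- P11 ⬝ P11 ⊆ P11, left part -/
lemma r1L {x y : A} (hx1 : ε*x = x) (hx2 : x*ε = x) (hy1 : ε*y = y) : ε*(x*y) = x*y := by
  have h := linL halt₁ ε x y
  rw [hx1, hx2, hy1, add_mul] at h
  -- h : x*y + x*y = ε*(x*y) + x*y
  exact (add_right_cancel h).symm

/-- P11 ⬝ P11 ⊆ P11, right part -/
lemma r1R {x y : A} (hx2 : x*ε = x) (hy1 : ε*y = y) (hy2 : y*ε = y) : (x*y)*ε = x*y := by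
  have h := linR halt₂ y ε x
  rw [hy2, hy1, hx2, mul_add] at h
  -- h : x*y + x*y = x*y*ε + x*y
  exact (add_right_cancel h).symm

/-- P11 ⬝ P12 ⊆ P12, left part -/
lemma r2L {x m : A} (hx1 : ε*x = x) (hx2 : x*ε = x) (hm1 : ε*m = m) : ε*(x*m) = x*m := by
  have h := linL halt₁ ε x m
  rw [hx1, hx2, hm1, add_mul] at h
  exact (add_right_cancel h).symm

/-- P11 ⬝ P12 ⊆ P12, right part -/
lemma r2R {x m : A} (hx2 : x*ε = x) (hm1 : ε*m = m) (hm2 : m*ε = 0) : (x*m)*ε = 0 := by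
  have h := linR halt₂ m ε x
  rw [hm2, hm1, hx2, zero_add] at h
  -- h : x*m = x*m*ε + x*m
  exact (right_eq_add.mp h)

/-- P12 ⬝ P12 ⊆ P21, left part -/
lemma r7L {m m' : A} (hm1 : ε*m = m) (hm2 : m*ε = 0) (hm'1 : ε*m' = m') : ε*(m*m') = 0 := by
  have h := linL halt₁ ε m m'
  rw [hm1, hm2, add_zero, hm'1] at h
  -- h : m*m' = ε*(m*m') + m*m'
  exact right_eq_add.mp h

/-- P12 ⬝ P12 ⊆ P21, right part -/
lemma r7R {m m' : A} (hm2 : m*ε = 0) (hm'1 : ε*m' = m') (hm'2 : m'*ε = 0) : (m*m')*ε = m*m' := by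
  have h := linR halt₂ m' ε m
  rw [hm'2, hm'1, hm2, zero_add, zero_mul, add_zero] at h
  exact h.symm

/-- P12 ⬝ P21 ⊆ P11, left part -/
lemma r8L {m v : A} (hm1 : ε*m = m) (hm2 : m*ε = 0) (hv1 : ε*v = 0) : ε*(m*v) = m*v := by
  have h := linL halt₁ ε m v
  rw [hm1, hm2, add_zero, hv1, mul_zero, add_zero] at h
  exact h.symm

/-- P12 ⬝ P21 ⊆ P11, right part -/
lemma r8R {m v : A} (hm2 : m*ε = 0) (hv1 : ε*v = 0) (hv2 : v*ε = v) : (m*v)*ε = m*v := by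
  have h := linR halt₂ v ε m
  rw [hv2, hv1, add_zero, hm2, zero_mul, add_zero] at h
  exact h.symm

omit halt₁ halt₂ hεi
variable (hεs : star ε = ε)
include hεs

lemma starP11 {x : A} (hx1 : ε*x = x) (hx2 : x*ε = x) :
    ε*(star x) = star x ∧ (star x)*ε = star x := by
  constructor
  · have := congrArg star hx2
    rwa [star_mul, hεs] at this
  · have := congrArg star hx1
    rwa [star_mul, hεs] at this

lemma starP12 {m : A} (hm1 : ε*m = m) (hm2 : m*ε = 0) :
    ε*(star m) = 0 ∧ (star m)*ε = star m := by
  constructor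
  · have := congrArg star hm2
    rwa [star_mul, hεs, star_zero] at this
  · have := congrArg star hm1
    rwa [star_mul, hεs] at this

lemma starP21 {v : A} (hv1 : ε*v = 0) (hv2 : v*ε = v) :
    ε*(star v) = star v ∧ (star v)*ε = 0 := by
  constructor
  · have := congrArg star hv2
    rwa [star_mul, hεs] at this
  · have := congrArg star hv1
    rwa [star_mul, hεs, star_zero] at this

end SJP
end part2

section part3
variable {A : Type*} [NonAssocRing A] [Module ℂ A] [StarRing A]
namespace SJP

lemma ofFn_pattern (M : ℕ) (g : Fin (M+2) → A) (w : Fin M → A) (u v : A)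
    (hw : ∀ (i : ℕ) (h : i < M), g ⟨i, by omega⟩ = w ⟨i, h⟩)
    (hu : g ⟨M, by omega⟩ = u) (hv : g ⟨M+1, by omega⟩ = v) :
    List.ofFn g = List.ofFn w ++ [u, v] := by
  apply List.ext_getElem
  · simp
  · intro i h1 h2
    rw [List.getElem_ofFn]
    rcases lt_trichotomy i M with h | h | h
    · rw [List.getElem_append_left (by simpa using h)]
      rw [List.getElem_ofFn]
      exact hw i h
    · subst h
      rw [List.getElem_append_right (by simp)]
      simpa using hu
    · have h1' : i < M + 2 := by simp at h1; omega
      have hi : i = M + 1 := by omega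
      subst hi
      rw [List.getElem_append_right (by simp)]
      simpa using hv

lemma lsj_append_pair (L : List A) (hL : L ≠ []) (x y : A) :
    leftStarJordan (L ++ [x, y]) = starJordan (starJordan (leftStarJordan L) x) y := by
  obtain ⟨a, l, rfl⟩ := List.exists_cons_of_ne_nil hL
  show List.foldl starJordan a (l ++ [x, y]) = _
  rw [List.foldl_append]
  rfl

lemma cast_mul_left (t : ℕ) (x : A) : (t : A) * x = t • x := by
  induction t with
  | zero => simp
  | succ k ih => push_cast; rw [add_mul, ih, one_mul, succ_nsmul]

lemma cast_mul_right (t : ℕ) (x : A) : x * (t : A) = t • x := by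
  induction t with
  | zero => simp
  | succ k ih => push_cast; rw [mul_add, ih, mul_one, succ_nsmul]

lemma sJ_cast (t : ℕ) (x : A) : starJordan ((t : A)) x = (2 * t) • x := by
  rw [starJordan, star_natCast, cast_mul_left, cast_mul_right, two_mul, add_nsmul]

lemma foldl_ones (j t : ℕ) :
    List.foldl starJordan ((t : A)) (List.replicate j 1) = ((2 ^ j * t : ℕ) : A) := by
  induction j generalizing t with
  | zero => simp
  | succ k ih =>
    rw [List.replicate_succ, List.foldl_cons]
    have h1 : starJordan ((t : A)) 1 = ((2 * t : ℕ) : A) := by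
      rw [two_mul, Nat.cast_add, starJordan, star_natCast, mul_one, one_mul]
    rw [h1, ih]
    congr 1
    ring

lemma lsj_rep (M : ℕ) (x y : A) :
    leftStarJordan (List.replicate M 1 ++ [x, y]) = 2 ^ M • starJordan x y := by
  cases M with
  | zero => simp [leftStarJordan]
  | succ k =>
    rw [lsj_append_pair _ (by simp) x y]
    have hrep : leftStarJordan (List.replicate (k+1) (1:A)) = ((2 ^ k : ℕ) : A) := by
      rw [List.replicate_succ]
      show List.foldl starJordan 1 (List.replicate k 1) = _
      have h := foldl_ones (A := A) k 1
      simpa using h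
    rw [hrep, sJ_cast, sJ_nsmul_left]
    congr 1
    ring

/-- the prefix constants -/
def Cc (Φ : A → A) (N : ℕ) (k : ℕ) : A :=
  leftStarJordan (List.ofFn (fun i : Fin N => if (i : ℕ) = k then Φ 1 else (1:A)))

/-- the bi-additive garbage term -/
def gg (Φ : A → A) (N : ℕ) (x y : A) : A :=
  ∑ j ∈ Finset.range N, starJordan (starJordan (Cc Φ N j) x) y

lemma gg_add_right (Φ : A → A) (N : ℕ) (x y y' : A) :
    gg Φ N x (y + y') = gg Φ N x y + gg Φ N x y' := by
  simp [gg, sJ_add_right, Finset.sum_add_distrib]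

lemma gg_add_left (Φ : A → A) (N : ℕ) (x x' y : A) :
    gg Φ N (x + x') y = gg Φ N x y + gg Φ N x' y := by
  simp [gg, sJ_add_right, sJ_add_left, Finset.sum_add_distrib]

lemma keyE (N : ℕ) (Φ : A → A)
    (hΦ : ∀ x y : A,
      Φ (leftStarJordan (List.ofFn (lastTwoFamily (N+2) x y))) =
        ∑ k : Fin (N+2), leftStarJordan (List.ofFn
          (Function.update (lastTwoFamily (N+2) x y) k (Φ (lastTwoFamily (N+2) x y k)))))
    (x y : A) :
    Φ (2 ^ N • starJordan x y)
      = gg Φ N x y + 2 ^ N • starJordan (Φ x) y + 2 ^ N • starJordan x (Φ y) := by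
  have h := hΦ x y
  have famlt : ∀ (i : Fin (N+2)), (i:ℕ) < N → lastTwoFamily (N+2) x y i = 1 := by
    intro i hi
    simp only [lastTwoFamily]
    rw [if_neg (by omega), if_neg (by omega)]
  have famN : lastTwoFamily (N+2) x y ⟨N, by omega⟩ = x := by
    simp only [lastTwoFamily]
    rw [if_pos (by simp)]
  have famN1 : lastTwoFamily (N+2) x y ⟨N+1, by omega⟩ = y := by
    simp only [lastTwoFamily]
    rw [if_neg (by simp), if_pos (by simp)]
  have hofn : List.ofFn (lastTwoFamily (N+2) x y) = List.replicate N 1 ++ [x, y] := by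
    have h2 := ofFn_pattern N (lastTwoFamily (N+2) x y) (fun _ => 1) x y
      (fun i hi => famlt ⟨i, by omega⟩ hi) famN famN1
    simpa [List.ofFn_const] using h2
  rw [hofn, lsj_rep] at h
  set G : ℕ → A := fun j => if j < N then starJordan (starJordan (Cc Φ N j) x) y
    else if j = N then 2 ^ N • starJordan (Φ x) y else 2 ^ N • starJordan x (Φ y) with hG
  have hGlt : ∀ j, j < N → G j = starJordan (starJordan (Cc Φ N j) x) y := by
    intro j hj
    rw [hG]
    exact if_pos hj
  have hGN : G N = 2 ^ N • starJordan (Φ x) y := by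
    rw [hG]
    have h1 : (if (N:ℕ) < N then starJordan (starJordan (Cc Φ N N) x) y
        else if N = N then 2 ^ N • starJordan (Φ x) y else 2 ^ N • starJordan x (Φ y))
        = 2 ^ N • starJordan (Φ x) y := by
      rw [if_neg (lt_irrefl N), if_pos rfl]
    exact h1
  have hGN1 : G (N+1) = 2 ^ N • starJordan x (Φ y) := by
    rw [hG]
    have h1 : (if (N+1:ℕ) < N then starJordan (starJordan (Cc Φ N (N+1)) x) y
        else if N+1 = N then 2 ^ N • starJordan (Φ x) y else 2 ^ N • starJordan x (Φ y))
        = 2 ^ N • starJordan x (Φ y) := by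
      rw [if_neg (by omega), if_neg (by omega)]
    exact h1
  have hterm : ∀ k : Fin (N+2),
      leftStarJordan (List.ofFn (Function.update (lastTwoFamily (N+2) x y) k
        (Φ (lastTwoFamily (N+2) x y k)))) = G (k:ℕ) := by
    intro k
    rcases lt_trichotomy (k:ℕ) N with hk | hk | hk
    · rw [famlt k hk]
      have hup : List.ofFn (Function.update (lastTwoFamily (N+2) x y) k (Φ 1))
          = List.ofFn (fun i : Fin N => if (i:ℕ) = (k:ℕ) then Φ 1 else (1:A)) ++ [x, y] := by
        apply ofFn_pattern
        · intro i hi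
          rw [Function.update_apply]
          by_cases hik : i = (k:ℕ)
          · rw [if_pos (by exact Fin.ext (by simpa using hik)), if_pos hik]
          · rw [if_neg (by
                intro hcon
                exact hik (by simpa using congrArg Fin.val hcon)), if_neg hik]
            exact famlt _ hi
        · rw [Function.update_of_ne (by exact Fin.ne_of_val_ne (by simpa using hk.ne'))]
          exact famN
        · rw [Function.update_of_ne (by exact Fin.ne_of_val_ne (by simp; omega))]
          exact famN1
      rw [hup, lsj_append_pair _ (by simp [List.ofFn_eq_nil_iff]; omega) x y]
      rw [hGlt _ hk]
      rfl
    · have hk' : k = (⟨N, by omega⟩ : Fin (N+2)) := Fin.ext (by simpa using hk)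
      rw [hk', famN]
      have hup : List.ofFn (Function.update (lastTwoFamily (N+2) x y) ⟨N, by omega⟩ (Φ x))
          = List.ofFn (fun _ : Fin N => (1:A)) ++ [Φ x, y] := by
        apply ofFn_pattern
        · intro i hi
          rw [Function.update_of_ne (by exact Fin.ne_of_val_ne (by simp; omega))]
          exact famlt _ (by simpa using hi)
        · rw [Function.update_self]
        · rw [Function.update_of_ne (by exact Fin.ne_of_val_ne (by simp))]
          exact famN1
      rw [hup]
      rw [List.ofFn_const, lsj_rep]
      exact hGN.symm
    · have hk2 : (k:ℕ) = N + 1 := by omega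
      have hk' : k = (⟨N+1, by omega⟩ : Fin (N+2)) := Fin.ext (by simpa using hk2)
      rw [hk', famN1]
      have hup : List.ofFn (Function.update (lastTwoFamily (N+2) x y) ⟨N+1, by omega⟩ (Φ y))
          = List.ofFn (fun _ : Fin N => (1:A)) ++ [x, Φ y] := by
        apply ofFn_pattern
        · intro i hi
          rw [Function.update_of_ne (by exact Fin.ne_of_val_ne (by simp; omega))]
          exact famlt _ (by simpa using hi)
        · rw [Function.update_of_ne (by exact Fin.ne_of_val_ne (by simp))]
          exact famN
        · rw [Function.update_self]
      rw [hup]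
      rw [List.ofFn_const, lsj_rep]
      exact hGN1.symm
  rw [Finset.sum_congr rfl (fun k _ => hterm k)] at h
  rw [Fin.sum_univ_eq_sum_range G (N+2)] at h
  rw [Finset.sum_range_succ, Finset.sum_range_succ] at h
  have hsum : ∑ j ∈ Finset.range N, G j = gg Φ N x y := by
    exact Finset.sum_congr rfl fun j hj => hGlt j (Finset.mem_range.mp hj)
  rw [hsum] at h
  rw [hGN, hGN1] at h
  exact h

end SJP
end part3

section part4
variable {A : Type*} [NonAssocRing A] [Module ℂ A] [StarRing A]

namespace SJP

variable (Φ : A → A) (g : A → A → A) (K : ℕ)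
variable (hK : K ≠ 0)
variable (hE : ∀ x y : A, Φ (K • starJordan x y)
  = g x y + K • starJordan (Φ x) y + K • starJordan x (Φ y))
variable (hgx : ∀ x x' y : A, g (x + x') y = g x y + g x' y)
variable (hgy : ∀ x y y' : A, g x (y + y') = g x y + g x y')

section core
include hE hgy

lemma phi0 : Φ 0 = 0 := by
  have hg0 : g 0 0 = 0 := by
    have h := hgy 0 0 0
    rw [add_zero] at h
    exact left_eq_add.mp h
  have h := hE 0 0
  rw [sJ_zero_left, smul_zero, hg0, sJ_zero_right, sJ_zero_left] at h
  simpa using h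

lemma dL (x s a1 a2 a3 a4 : A) (hs : s = a1 + a2 + a3 + a4) :
    Φ (K • starJordan x s)
      = Φ (K • starJordan x a1) + Φ (K • starJordan x a2) + Φ (K • starJordan x a3)
        + Φ (K • starJordan x a4)
        + K • starJordan x (Φ s - Φ a1 - Φ a2 - Φ a3 - Φ a4) := by
  have h0 := hE x s
  have h1 := hE x a1
  have h2 := hE x a2
  have h3 := hE x a3
  have h4 := hE x a4
  have hg : g x s = g x a1 + g x a2 + g x a3 + g x a4 := by
    rw [hs, hgy, hgy, hgy]
  have hj : starJordan (Φ x) s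
      = starJordan (Φ x) a1 + starJordan (Φ x) a2 + starJordan (Φ x) a3 + starJordan (Φ x) a4 := by
    rw [hs, sJ_add_right, sJ_add_right, sJ_add_right]
  have hj2 : starJordan x (Φ s - Φ a1 - Φ a2 - Φ a3 - Φ a4)
      = starJordan x (Φ s) - starJordan x (Φ a1) - starJordan x (Φ a2)
        - starJordan x (Φ a3) - starJordan x (Φ a4) := by
    rw [sJ_sub_right, sJ_sub_right, sJ_sub_right, sJ_sub_right]
  rw [h0, h1, h2, h3, h4, hg, hj, hj2]
  simp only [smul_add, smul_sub]
  abel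

end core

section core2
include hE hgx

lemma dR (y s a1 a2 a3 a4 : A) (hs : s = a1 + a2 + a3 + a4) :
    Φ (K • starJordan s y)
      = Φ (K • starJordan a1 y) + Φ (K • starJordan a2 y) + Φ (K • starJordan a3 y)
        + Φ (K • starJordan a4 y)
        + K • starJordan (Φ s - Φ a1 - Φ a2 - Φ a3 - Φ a4) y := by
  have h0 := hE s y
  have h1 := hE a1 y
  have h2 := hE a2 y
  have h3 := hE a3 y
  have h4 := hE a4 y
  have hg : g s y = g a1 y + g a2 y + g a3 y + g a4 y := by
    rw [hs, hgx, hgx, hgx]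
  have hj : starJordan s (Φ y)
      = starJordan a1 (Φ y) + starJordan a2 (Φ y) + starJordan a3 (Φ y) + starJordan a4 (Φ y) := by
    rw [hs, sJ_add_left, sJ_add_left, sJ_add_left]
  have hj2 : starJordan (Φ s - Φ a1 - Φ a2 - Φ a3 - Φ a4) y
      = starJordan (Φ s) y - starJordan (Φ a1) y - starJordan (Φ a2) y
        - starJordan (Φ a3) y - starJordan (Φ a4) y := by
    rw [sJ_sub_left, sJ_sub_left, sJ_sub_left, sJ_sub_left]
  rw [h0, h1, h2, h3, h4, hg, hj, hj2]
  simp only [smul_add, smul_sub]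
  abel

end core2

section lemmas
variable (halt₁ : ∀ a b : A, a * a * b = a * (a * b))
variable (halt₂ : ∀ a b : A, b * a * a = b * (a * a))
variable (ε : A) (hεs : star ε = ε) (hεi : ε * ε = ε)

include hK hE hgx hgy halt₁ hεs hεi

/-- additivity on P12 ⊕ P21 -/
lemma lemC (u v : A) (hu1 : ε*u = u) (hu2 : u*ε = 0) (hv1 : ε*v = 0) (hv2 : v*ε = v) :
    Φ (u + v) = Φ u + Φ v := by
  have hΦ0 : Φ 0 = 0 := phi0 Φ g K hE hgy
  have hsu := starP12 ε hεs hu1 hu2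
  have hsv := starP21 ε hεs hv1 hv2
  have hx₀s : star (ε - (1-ε)) = ε - (1-ε) := by rw [star_sub, hεs, star_sub, star_one, hεs]
  -- starJordan values, right slot with ε
  have h1 : starJordan u ε = 0 := by
    rw [starJordan, hu2, hsu.1, add_zero]
  have h2 : starJordan v ε = v + star v := by
    rw [starJordan, hv2, hsv.1]
  have h3 : starJordan (u+v) ε = v + star v := by
    rw [sJ_add_left, h1, h2, zero_add]
  -- right slot with φ = 1 - ε
  have h4 : starJordan u (1-ε) = u + star u := by
    rw [starJordan, mul_sub, sub_mul, mul_one, one_mul, hu2, hsu.1, sub_zero, sub_zero]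
  have h5 : starJordan v (1-ε) = 0 := by
    rw [starJordan, mul_sub, sub_mul, mul_one, one_mul, hv2, hsv.1, sub_self, sub_self, add_zero]
  have h6 : starJordan (u+v) (1-ε) = u + star u := by
    rw [sJ_add_left, h4, h5, add_zero]
  -- left slot with x₀ = ε - (1-ε)
  have h7 : starJordan (ε - (1-ε)) u = 0 := by
    rw [starJordan, hx₀s, sub_mul, mul_sub, sub_mul, mul_sub, one_mul, mul_one, hu1, hu2]
    abel
  have h8 : starJordan (ε - (1-ε)) v = 0 := by
    rw [starJordan, hx₀s, sub_mul, mul_sub, sub_mul, mul_sub, one_mul, mul_one, hv1, hv2]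
    abel
  have h9 : starJordan (ε - (1-ε)) (u+v) = 0 := by
    rw [sJ_add_right, h7, h8, add_zero]
  -- instance 1 : y = ε
  have I1 := dR Φ g K hE hgx ε (u+v) u v 0 0 (by abel)
  rw [h3, h1, h2] at I1
  simp only [sJ_zero_left, smul_zero, hΦ0, sub_zero, zero_add, add_zero] at I1
  have c1 : starJordan (Φ (u+v) - Φ u - Φ v) ε = 0 :=
    tfN K hK _ (left_eq_add.mp I1)
  -- instance 2 : y = 1 - ε
  have I2 := dR Φ g K hE hgx (1-ε) (u+v) u v 0 0 (by abel)
  rw [h6, h4, h5] at I2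
  simp only [sJ_zero_left, smul_zero, hΦ0, sub_zero, zero_add, add_zero] at I2
  have c2 : starJordan (Φ (u+v) - Φ u - Φ v) (1-ε) = 0 :=
    tfN K hK _ (left_eq_add.mp I2)
  -- instance 3 : x = ε - (1-ε)
  have I3 := dL Φ g K hE hgy (ε - (1-ε)) (u+v) u v 0 0 (by abel)
  rw [h9, h7, h8] at I3
  simp only [sJ_zero_right, smul_zero, hΦ0, sub_zero, zero_add, add_zero] at I3
  have c3 : starJordan (ε - (1-ε)) (Φ (u+v) - Φ u - Φ v) = 0 :=
    tfN K hK _ I3.symm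
  -- make the defect opaque
  obtain ⟨R, hR⟩ : ∃ R, Φ (u+v) - Φ u - Φ v = R := ⟨_, rfl⟩
  rw [hR] at c1 c2 c3
  have c1' : R*ε + ε*(star R) = 0 := by rw [← c1, starJordan]
  have c2' : R*(1-ε) + (1-ε)*(star R) = 0 := by rw [← c2, starJordan]
  have c12 : R + star R = 0 := by
    have e1 : R*(1-ε) = R - R*ε := by rw [mul_sub, mul_one]
    have e2 : (1-ε)*star R = star R - ε*star R := by rw [sub_mul, one_mul]
    calc R + star R = (R*ε + ε*star R) + (R*(1-ε) + (1-ε)*star R) := by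
          rw [e1, e2]; abel
    _ = 0 + 0 := by rw [c1', c2']
    _ = 0 := by rw [add_zero]
  have cs : star R = -R := eq_neg_of_add_eq_zero_right c12
  have cRε : R*ε = ε*R := by
    have h := c1'
    rw [cs, mul_neg] at h
    have h2 : R*ε - ε*R = 0 := by rw [sub_eq_add_neg]; exact h
    exact sub_eq_zero.mp h2
  have c3' : (ε*R + R*ε) + (ε*R + R*ε) - (R + R) = 0 := by
    have e3 : (ε - (1-ε))*R = ε*R - (R - ε*R) := by rw [sub_mul, sub_mul, one_mul]
    have e4 : R*(ε - (1-ε)) = R*ε - (R - R*ε) := by rw [mul_sub, mul_sub, mul_one]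
    rw [← c3, starJordan, hx₀s, e3, e4]
    abel
  have cεR : ε*R + R*ε = R := tf2' _ _ (by
    have := sub_eq_zero.mp c3'
    exact this)
  rw [cRε] at cεR
  have h10 := congrArg (fun z => ε * z) cεR
  simp only [mul_add] at h10
  rw [← halt₁ ε R, hεi] at h10
  have hεR0 : ε*R = 0 := add_eq_left.mp h10
  have hR0 : R = 0 := by rw [← cεR, hεR0, add_zero]
  have hfin : Φ (u+v) - (Φ u + Φ v) = 0 := by
    calc Φ (u+v) - (Φ u + Φ v) = Φ (u+v) - Φ u - Φ v := by abel
    _ = R := hR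
    _ = 0 := hR0
  exact sub_eq_zero.mp hfin

/-- additivity on P11 ⊕ P12 ⊕ P21 -/
lemma lemM3 (a u v : A) (ha1 : ε*a = a) (ha2 : a*ε = a)
    (hu1 : ε*u = u) (hu2 : u*ε = 0) (hv1 : ε*v = 0) (hv2 : v*ε = v) :
    Φ (a + u + v) = Φ a + Φ u + Φ v := by
  have hΦ0 : Φ 0 = 0 := phi0 Φ g K hE hgy
  have hφs : star (1-ε) = 1-ε := by rw [star_sub, star_one, hεs]
  have hx₀s : star (ε - (1-ε)) = ε - (1-ε) := by rw [star_sub, hεs, hφs]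
  have j1 : starJordan (1-ε) a = 0 := by
    rw [starJordan, hφs, sub_mul, mul_sub, one_mul, mul_one, ha1, ha2, sub_self, add_zero]
  have j2 : starJordan (1-ε) u = u := by
    rw [starJordan, hφs, sub_mul, mul_sub, one_mul, mul_one, hu1, hu2, sub_self, sub_zero,
      zero_add]
  have j3 : starJordan (1-ε) v = v := by
    rw [starJordan, hφs, sub_mul, mul_sub, one_mul, mul_one, hv1, hv2, sub_zero, sub_self,
      add_zero]
  have j4 : starJordan (1-ε) (a+u+v) = u + v := by
    rw [sJ_add_right, sJ_add_right, j1, j2, j3, zero_add]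
  have j5 : starJordan (ε-(1-ε)) a = a + a := by
    rw [starJordan, hx₀s, sub_mul, mul_sub, sub_mul, mul_sub, one_mul, mul_one, ha1, ha2]
    abel
  have j6 : starJordan (ε-(1-ε)) u = 0 := by
    rw [starJordan, hx₀s, sub_mul, mul_sub, sub_mul, mul_sub, one_mul, mul_one, hu1, hu2]
    abel
  have j7 : starJordan (ε-(1-ε)) v = 0 := by
    rw [starJordan, hx₀s, sub_mul, mul_sub, sub_mul, mul_sub, one_mul, mul_one, hv1, hv2]
    abel
  have j8 : starJordan (ε-(1-ε)) (a+u+v) = a + a := by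
    rw [sJ_add_right, sJ_add_right, j5, j6, j7, add_zero, add_zero]
  -- instance x = 1 - ε
  have I1 := dL Φ g K hE hgy (1-ε) (a+u+v) a u v 0 ((add_zero _).symm)
  rw [j4, j1, j2, j3] at I1
  simp only [sJ_zero_right, smul_zero, hΦ0, sub_zero, zero_add, add_zero] at I1
  have hC : Φ (K•(u+v)) = Φ (K•u) + Φ (K•v) := by
    rw [smul_add]
    exact lemC Φ g K hK hE hgx hgy halt₁ ε hεs hεi (K•u) (K•v)
      (by rw [mul_smul_comm, hu1]) (by rw [smul_mul_assoc, hu2, smul_zero])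
      (by rw [mul_smul_comm, hv1, smul_zero]) (by rw [smul_mul_assoc, hv2])
  rw [hC] at I1
  have c1 : starJordan (1-ε) (Φ (a+u+v) - Φ a - Φ u - Φ v) = 0 :=
    tfN K hK _ (left_eq_add.mp I1)
  -- instance x = ε - (1-ε)
  have I2 := dL Φ g K hE hgy (ε-(1-ε)) (a+u+v) a u v 0 ((add_zero _).symm)
  rw [j8, j5, j6, j7] at I2
  simp only [sJ_zero_right, smul_zero, hΦ0, sub_zero, zero_add, add_zero] at I2
  have c2 : starJordan (ε-(1-ε)) (Φ (a+u+v) - Φ a - Φ u - Φ v) = 0 :=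
    tfN K hK _ (left_eq_add.mp I2)
  obtain ⟨W, hW⟩ : ∃ W, Φ (a+u+v) - Φ a - Φ u - Φ v = W := ⟨_, rfl⟩
  rw [hW] at c1 c2
  have hεx : starJordan ε W = 0 := by
    have hsum : starJordan ε W = starJordan (ε - (1-ε)) W + starJordan (1-ε) W := by
      rw [← sJ_add_left]
      congr 1
      abel
    rw [hsum, c2, c1, add_zero]
  have hsplit : starJordan ε W + starJordan (1-ε) W = W + W := by
    have e1 : (1-ε)*W = W - ε*W := by rw [sub_mul, one_mul]
    have e2 : W*(1-ε) = W - W*ε := by rw [mul_sub, mul_one]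
    rw [starJordan, starJordan, hεs, hφs, e1, e2]
    abel
  rw [hεx, c1, add_zero] at hsplit
  have hW0 : W = 0 := tf2 _ hsplit.symm
  have hfin : Φ (a+u+v) - (Φ a + Φ u + Φ v) = 0 := by
    calc Φ (a+u+v) - (Φ a + Φ u + Φ v) = Φ (a+u+v) - Φ a - Φ u - Φ v := by abel
    _ = W := hW
    _ = 0 := hW0
  exact sub_eq_zero.mp hfin

/-- additivity on P11 ⊕ P12 ⊕ P21 ⊕ P22 -/
lemma lemM4 (a u v d : A) (ha1 : ε*a = a) (ha2 : a*ε = a)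
    (hu1 : ε*u = u) (hu2 : u*ε = 0) (hv1 : ε*v = 0) (hv2 : v*ε = v)
    (hd1 : ε*d = 0) (hd2 : d*ε = 0) :
    Φ (a + u + v + d) = Φ a + Φ u + Φ v + Φ d := by
  have hΦ0 : Φ 0 = 0 := phi0 Φ g K hE hgy
  have hφs : star (1-ε) = 1-ε := by rw [star_sub, star_one, hεs]
  have hφi : (1-ε)*(1-ε) = 1-ε := by
    rw [mul_sub, mul_one, sub_mul, one_mul, hεi]
    abel
  -- ε-row starJordan values
  have j1 : starJordan ε a = a + a := by rw [starJordan, hεs, ha1, ha2]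
  have j2 : starJordan ε u = u := by rw [starJordan, hεs, hu1, hu2, add_zero]
  have j3 : starJordan ε v = v := by rw [starJordan, hεs, hv1, hv2, zero_add]
  have j4 : starJordan ε d = 0 := by rw [starJordan, hεs, hd1, hd2, add_zero]
  have j5 : starJordan ε (a+u+v+d) = a + a + u + v := by
    rw [sJ_add_right, sJ_add_right, sJ_add_right, j1, j2, j3, j4, add_zero]
  have k1 : starJordan (1-ε) a = 0 := by
    rw [starJordan, hφs, sub_mul, mul_sub, one_mul, mul_one, ha1, ha2, sub_self, add_zero]
  have k2 : starJordan (1-ε) u = u := by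
    rw [starJordan, hφs, sub_mul, mul_sub, one_mul, mul_one, hu1, hu2, sub_self, sub_zero,
      zero_add]
  have k3 : starJordan (1-ε) v = v := by
    rw [starJordan, hφs, sub_mul, mul_sub, one_mul, mul_one, hv1, hv2, sub_zero, sub_self,
      add_zero]
  have k4 : starJordan (1-ε) d = d + d := by
    rw [starJordan, hφs, sub_mul, mul_sub, one_mul, mul_one, hd1, hd2, sub_zero]
  have k5 : starJordan (1-ε) (a+u+v+d) = u + v + (d + d) := by
    rw [sJ_add_right, sJ_add_right, sJ_add_right, k1, k2, k3, k4, zero_add]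
  -- instance x = ε
  have I1 := dL Φ g K hE hgy ε (a+u+v+d) a u v d rfl
  rw [j5, j1, j2, j3, j4] at I1
  simp only [smul_zero, hΦ0, add_zero] at I1
  have hsplit1 : Φ (K•(a+a+u+v)) = Φ (K•(a+a)) + Φ (K•u) + Φ (K•v) := by
    have harg : K•(a+a+u+v) = K•(a+a) + K•u + K•v := by
      simp only [smul_add]
    rw [harg]
    exact lemM3 Φ g K hK hE hgx hgy halt₁ ε hεs hεi (K•(a+a)) (K•u) (K•v)
      (by rw [mul_smul_comm, mul_add, ha1]) (by rw [smul_mul_assoc, add_mul, ha2])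
      (by rw [mul_smul_comm, hu1]) (by rw [smul_mul_assoc, hu2, smul_zero])
      (by rw [mul_smul_comm, hv1, smul_zero]) (by rw [smul_mul_assoc, hv2])
  rw [hsplit1] at I1
  have c1 : starJordan ε (Φ (a+u+v+d) - Φ a - Φ u - Φ v - Φ d) = 0 :=
    tfN K hK _ (left_eq_add.mp I1)
  -- instance x = 1 - ε
  have I2 := dL Φ g K hE hgy (1-ε) (a+u+v+d) a u v d rfl
  rw [k5, k1, k2, k3, k4] at I2
  simp only [smul_zero, hΦ0, zero_add] at I2
  have hsplit2 : Φ (K•(u+v+(d+d))) = Φ (K•(d+d)) + Φ (K•v) + Φ (K•u) := by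
    have harg : K•(u+v+(d+d)) = K•(d+d) + K•v + K•u := by
      simp only [smul_add]
      abel
    rw [harg]
    exact lemM3 Φ g K hK hE hgx hgy halt₁ (1-ε) hφs hφi (K•(d+d)) (K•v) (K•u)
      (by rw [mul_smul_comm, mul_add, sub_mul, one_mul, hd1, sub_zero])
      (by rw [smul_mul_assoc, add_mul, mul_sub, mul_one, hd2, sub_zero])
      (by rw [mul_smul_comm, sub_mul, one_mul, hv1, sub_zero])
      (by rw [smul_mul_assoc, mul_sub, mul_one, hv2, sub_self, smul_zero])
      (by rw [mul_smul_comm, sub_mul, one_mul, hu1, sub_self, smul_zero])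
      (by rw [smul_mul_assoc, mul_sub, mul_one, hu2, sub_zero])
  rw [hsplit2] at I2
  have c2 : starJordan (1-ε) (Φ (a+u+v+d) - Φ a - Φ u - Φ v - Φ d) = 0 := by
    apply tfN K hK
    have h3 : Φ (K•u) + Φ (K•v) + Φ (K•(d+d))
        + K • starJordan (1-ε) (Φ (a+u+v+d) - Φ a - Φ u - Φ v - Φ d)
        = Φ (K•u) + Φ (K•v) + Φ (K•(d+d)) := by
      rw [← I2]
      abel
    exact add_eq_left.mp h3
  obtain ⟨W, hW⟩ : ∃ W, Φ (a+u+v+d) - Φ a - Φ u - Φ v - Φ d = W := ⟨_, rfl⟩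
  rw [hW] at c1 c2
  have hsplit : starJordan ε W + starJordan (1-ε) W = W + W := by
    have e1 : (1-ε)*W = W - ε*W := by rw [sub_mul, one_mul]
    have e2 : W*(1-ε) = W - W*ε := by rw [mul_sub, mul_one]
    rw [starJordan, starJordan, hεs, hφs, e1, e2]
    abel
  rw [c1, c2, add_zero] at hsplit
  have hW0 : W = 0 := tf2 _ hsplit.symm
  have hfin : Φ (a+u+v+d) - (Φ a + Φ u + Φ v + Φ d) = 0 := by
    calc Φ (a+u+v+d) - (Φ a + Φ u + Φ v + Φ d)
        = Φ (a+u+v+d) - Φ a - Φ u - Φ v - Φ d := by abel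
    _ = W := hW
    _ = 0 := hW0
  exact sub_eq_zero.mp hfin

include halt₂

/-- additivity on P12 -/
lemma lemA12 (p q : A) (hp1 : ε*p = p) (hp2 : p*ε = 0) (hq1 : ε*q = q) (hq2 : q*ε = 0) :
    Φ (p + q) = Φ p + Φ q := by
  have hΦ0 : Φ 0 = 0 := phi0 Φ g K hE hgy
  have hφs : star (1-ε) = 1-ε := by rw [star_sub, star_one, hεs]
  have hsq := starP12 ε hεs hq1 hq2
  have e1 : ε*(1-ε) = 0 := by rw [mul_sub, mul_one, hεi, sub_self]
  have e2 : (1-ε)*ε = 0 := by rw [sub_mul, one_mul, hεi, sub_self]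
  have e3 : q*(1-ε) = q := by rw [mul_sub, mul_one, hq2, sub_zero]
  have e4 : (1-ε)*(star q) = star q := by rw [sub_mul, one_mul, hsq.1, sub_zero]
  -- step 1: scaled defect representation
  have jεp : starJordan ε p = p := by rw [starJordan, hεs, hp1, hp2, add_zero]
  have jεq : starJordan ε q = q := by rw [starJordan, hεs, hq1, hq2, add_zero]
  have jεpq : starJordan ε (p+q) = p + q := by rw [sJ_add_right, jεp, jεq]
  have jφp : starJordan (1-ε) p = p := by
    rw [starJordan, hφs, sub_mul, mul_sub, one_mul, mul_one, hp1, hp2, sub_self, sub_zero,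
      zero_add]
  have jφq : starJordan (1-ε) q = q := by
    rw [starJordan, hφs, sub_mul, mul_sub, one_mul, mul_one, hq1, hq2, sub_self, sub_zero,
      zero_add]
  have jφpq : starJordan (1-ε) (p+q) = p + q := by rw [sJ_add_right, jφp, jφq]
  have I1 := dL Φ g K hE hgy ε (p+q) p q 0 0 (by rw [add_zero, add_zero])
  rw [jεpq, jεp, jεq] at I1
  simp only [sJ_zero_right, smul_zero, hΦ0, sub_zero, add_zero] at I1
  have I2 := dL Φ g K hE hgy (1-ε) (p+q) p q 0 0 (by rw [add_zero, add_zero])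
  rw [jφpq, jφp, jφq] at I2
  simp only [sJ_zero_right, smul_zero, hΦ0, sub_zero, add_zero] at I2
  obtain ⟨S, hS⟩ : ∃ S, Φ (p+q) - Φ p - Φ q = S := ⟨_, rfl⟩
  rw [hS] at I1 I2
  have hcan : K • starJordan ε S = K • starJordan (1-ε) S := add_left_cancel (I1.symm.trans I2)
  have hεφ : starJordan ε S = starJordan (1-ε) S := by
    have h6 : K • (starJordan ε S - starJordan (1-ε) S) = 0 := by
      rw [smul_sub, hcan, sub_self]
    exact sub_eq_zero.mp (tfN K hK _ h6)
  have hsplit : starJordan ε S + starJordan (1-ε) S = S + S := by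
    have f1 : (1-ε)*S = S - ε*S := by rw [sub_mul, one_mul]
    have f2 : S*(1-ε) = S - S*ε := by rw [mul_sub, mul_one]
    rw [starJordan, starJordan, hεs, hφs, f1, f2]
    abel
  rw [← hεφ] at hsplit
  have hεSS : starJordan ε S = S := tf2' _ _ hsplit
  rw [hεSS] at I1
  -- I1 : Φ (K•(p+q)) = Φ (K•p) + Φ (K•q) + K • S
  -- step 2 : Martindale factorization
  have hV : Φ (ε + q) = Φ ε + Φ q := by
    have h := lemM4 Φ g K hK hE hgx hgy halt₁ ε hεs hεi ε q 0 0 hεi hεi hq1 hq2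
      (mul_zero ε) (zero_mul ε) (mul_zero ε) (zero_mul ε)
    simpa [hΦ0] using h
  have m1 : starJordan (ε+q) (p+(1-ε)) = p*(star q) + (p + q) + (q*p + star q) := by
    rw [starJordan, star_add, hεs]
    simp only [mul_add, add_mul]
    rw [hp1, e1, e3, hp2, e2, e4]
    abel
  have m2 : starJordan ε (p+(1-ε)) = p := by
    rw [starJordan, hεs]
    simp only [mul_add, add_mul]
    rw [hp1, e1, hp2, e2]
    abel
  have m3 : starJordan q (p+(1-ε)) = p*(star q) + q + (q*p + star q) := by
    rw [starJordan]
    simp only [mul_add, add_mul]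
    rw [e3, e4]
    abel
  have I3 := dR Φ g K hE hgx (p+(1-ε)) (ε+q) ε q 0 0 (by rw [add_zero, add_zero])
  rw [m1, m2, m3] at I3
  simp only [sJ_zero_left, smul_zero, hΦ0, sub_zero, add_zero] at I3
  have hV0 : Φ (ε+q) - Φ ε - Φ q = 0 := by rw [hV]; abel
  rw [hV0, sJ_zero_left, smul_zero, add_zero] at I3
  -- I3 : Φ (K•(p*star q + (p+q) + (q*p + star q))) = Φ (K•p) + Φ (K•(p*star q + q + (q*p + star q)))
  -- Peirce memberships for the splits
  have hpqs1 : ε*(p*star q) = p*star q := r8L halt₁ halt₂ ε hεi hp1 hp2 hsq.1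
  have hpqs2 : (p*star q)*ε = p*star q := r8R halt₁ halt₂ ε hεi hp2 hsq.1 hsq.2
  have hqp1 : ε*(q*p) = 0 := r7L halt₁ halt₂ ε hεi hq1 hq2 hp1
  have hqp2 : (q*p)*ε = q*p := r7R halt₁ halt₂ ε hεi hq2 hp1 hp2
  have ma1 : ε*(K•(p*star q)) = K•(p*star q) := by rw [mul_smul_comm, hpqs1]
  have ma2 : (K•(p*star q))*ε = K•(p*star q) := by rw [smul_mul_assoc, hpqs2]
  have mv1 : ε*(K•(q*p + star q)) = 0 := by
    rw [mul_smul_comm, mul_add, hqp1, hsq.1, add_zero, smul_zero]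
  have mv2 : (K•(q*p + star q))*ε = K•(q*p + star q) := by
    rw [smul_mul_assoc, add_mul, hqp2, hsq.2]
  have hsplitL : Φ (K•(p*star q + (p+q) + (q*p + star q)))
      = Φ (K•(p*star q)) + Φ (K•(p+q)) + Φ (K•(q*p + star q)) := by
    rw [show K•(p*star q + (p+q) + (q*p + star q))
        = K•(p*star q) + K•(p+q) + K•(q*p + star q) + 0 by simp only [smul_add, add_zero]]
    have h := lemM4 Φ g K hK hE hgx hgy halt₁ ε hεs hεi (K•(p*star q)) (K•(p+q))
      (K•(q*p + star q)) 0 ma1 ma2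
      (by rw [mul_smul_comm, mul_add, hp1, hq1])
      (by rw [smul_mul_assoc, add_mul, hp2, hq2, add_zero, smul_zero])
      mv1 mv2 (mul_zero ε) (zero_mul ε)
    simpa [hΦ0] using h
  have hsplitR : Φ (K•(p*star q + q + (q*p + star q)))
      = Φ (K•(p*star q)) + Φ (K•q) + Φ (K•(q*p + star q)) := by
    rw [show K•(p*star q + q + (q*p + star q))
        = K•(p*star q) + K•q + K•(q*p + star q) + 0 by simp only [smul_add, add_zero]]
    have h := lemM4 Φ g K hK hE hgx hgy halt₁ ε hεs hεi (K•(p*star q)) (K•q)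
      (K•(q*p + star q)) 0 ma1 ma2
      (by rw [mul_smul_comm, hq1])
      (by rw [smul_mul_assoc, hq2, smul_zero])
      mv1 mv2 (mul_zero ε) (zero_mul ε)
    simpa [hΦ0] using h
  rw [hsplitL, hsplitR, I1] at I3
  -- I3 : X1 + (Y1 + Y2 + K•S) + X3 = Y1 + (X1 + Y2 + X3)
  have hKS : K • S = 0 := by
    have h2 : (Φ (K•(p*star q)) + (Φ (K•p) + Φ (K•q) + K•S) + Φ (K•(q*p + star q)))
        - (Φ (K•p) + (Φ (K•(p*star q)) + Φ (K•q) + Φ (K•(q*p + star q)))) = 0 := by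
      rw [I3, sub_self]
    calc K•S = (Φ (K•(p*star q)) + (Φ (K•p) + Φ (K•q) + K•S) + Φ (K•(q*p + star q)))
        - (Φ (K•p) + (Φ (K•(p*star q)) + Φ (K•q) + Φ (K•(q*p + star q)))) := by abel
    _ = 0 := h2
  have hS0 : S = 0 := tfN K hK _ hKS
  have hfin : Φ (p+q) - (Φ p + Φ q) = 0 := by
    calc Φ (p+q) - (Φ p + Φ q) = Φ (p+q) - Φ p - Φ q := by abel
    _ = S := hS
    _ = 0 := hS0
  exact sub_eq_zero.mp hfin

/-- additivity on P11, using the annihilation condition -/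
lemma lemA11 (hcl' : ∀ x : A, (∀ r : A, x * r * (1-ε) = 0) → x = 0)
    (a b : A) (ha1 : ε*a = a) (ha2 : a*ε = a) (hb1 : ε*b = b) (hb2 : b*ε = b) :
    Φ (a + b) = Φ a + Φ b := by
  have hΦ0 : Φ 0 = 0 := phi0 Φ g K hE hgy
  have hφs : star (1-ε) = 1-ε := by rw [star_sub, star_one, hεs]
  -- step 1 : (1-ε) • T = 0, hence T ∈ P11
  have j1 : starJordan (1-ε) a = 0 := by
    rw [starJordan, hφs, sub_mul, mul_sub, one_mul, mul_one, ha1, ha2, sub_self, add_zero]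
  have j2 : starJordan (1-ε) b = 0 := by
    rw [starJordan, hφs, sub_mul, mul_sub, one_mul, mul_one, hb1, hb2, sub_self, add_zero]
  have j3 : starJordan (1-ε) (a+b) = 0 := by rw [sJ_add_right, j1, j2, add_zero]
  have I1 := dL Φ g K hE hgy (1-ε) (a+b) a b 0 0 (by rw [add_zero, add_zero])
  rw [j3, j1, j2] at I1
  simp only [sJ_zero_right, smul_zero, hΦ0, sub_zero, add_zero, zero_add] at I1
  obtain ⟨T, hT⟩ : ∃ T, Φ (a+b) - Φ a - Φ b = T := ⟨_, rfl⟩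
  rw [hT] at I1
  have c1 : starJordan (1-ε) T = 0 := tfN K hK _ I1.symm
  have c1' : (1-ε)*T + T*(1-ε) = 0 := by rw [← c1, starJordan, hφs]
  have hm1 : ε*T + T*ε = T + T := by
    have f1 : (1-ε)*T = T - ε*T := by rw [sub_mul, one_mul]
    have f2 : T*(1-ε) = T - T*ε := by rw [mul_sub, mul_one]
    rw [f1, f2] at c1'
    have h2 : (T + T) - (ε*T + T*ε) = 0 := by rw [← c1']; abel
    exact (sub_eq_zero.mp h2).symm
  have hm2 : ε*(T*ε) = ε*T := by
    have h3 := congrArg (fun z => ε*z) hm1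
    simp only [mul_add] at h3
    rw [← halt₁ ε T, hεi] at h3
    exact add_left_cancel h3
  have hm3 : (ε*T)*ε = T*ε := by
    have h4 := congrArg (fun z => z*ε) hm1
    simp only [add_mul] at h4
    rw [halt₂ ε T, hεi] at h4
    exact add_right_cancel h4
  have hεTTε : ε*T = T*ε := by
    rw [← hm2, ← flex halt₁ halt₂ ε T, hm3]
  have hεT : ε*T = T := by
    rw [← hεTTε] at hm1
    exact tf2' _ _ hm1
  have hTε : T*ε = T := by rw [← hεTTε, hεT]
  -- step 2 : T*m = 0 for all m ∈ P12
  have hsT1 : ε*(star T) = star T := by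
    have h := congrArg star hTε; rwa [star_mul, hεs] at h
  have hsT2 : (star T)*ε = star T := by
    have h := congrArg star hεT; rwa [star_mul, hεs] at h
  have hsa := starP11 ε hεs ha1 ha2
  have hsb := starP11 ε hεs hb1 hb2
  have hTm : ∀ m : A, ε*m = m → m*ε = 0 → T*m = 0 := by
    intro m hm1' hm2'
    have jam : starJordan a m = a*m := by
      rw [starJordan, r3 halt₁ halt₂ ε hεi hm2' hsa.1 hsa.2, add_zero]
    have jbm : starJordan b m = b*m := by
      rw [starJordan, r3 halt₁ halt₂ ε hεi hm2' hsb.1 hsb.2, add_zero]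
    have jabm : starJordan (a+b) m = a*m + b*m := by
      rw [sJ_add_left, jam, jbm]
    have I4 := dR Φ g K hE hgx m (a+b) a b 0 0 (by rw [add_zero, add_zero])
    rw [jabm, jam, jbm] at I4
    simp only [sJ_zero_left, smul_zero, hΦ0, sub_zero, add_zero] at I4
    rw [hT] at I4
    have hadd : Φ (K•(a*m) + K•(b*m)) = Φ (K•(a*m)) + Φ (K•(b*m)) :=
      lemA12 Φ g K hK hE hgx hgy halt₁ halt₂ ε hεs hεi (K•(a*m)) (K•(b*m))
        (by rw [mul_smul_comm, r2L halt₁ halt₂ ε hεi ha1 ha2 hm1'])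
        (by rw [smul_mul_assoc, r2R halt₁ halt₂ ε hεi ha2 hm1' hm2', smul_zero])
        (by rw [mul_smul_comm, r2L halt₁ halt₂ ε hεi hb1 hb2 hm1'])
        (by rw [smul_mul_assoc, r2R halt₁ halt₂ ε hεi hb2 hm1' hm2', smul_zero])
    rw [show K•(a*m + b*m) = K•(a*m) + K•(b*m) from smul_add K _ _, hadd] at I4
    have c4 : starJordan T m = 0 := tfN K hK _ (left_eq_add.mp I4)
    have c4' : T*m + m*(star T) = 0 := by rw [← c4, starJordan]
    rw [r3 halt₁ halt₂ ε hεi hm2' hsT1 hsT2, add_zero] at c4'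
    exact c4'
  -- step 3 : T = 0 via the annihilation condition
  have hT0 : T = 0 := by
    apply hcl'
    intro r
    have hflexr : (ε*r)*ε = ε*(r*ε) := flex halt₁ halt₂ ε r
    have h11a : ε*(ε*(r*ε)) = ε*(r*ε) := by rw [← halt₁ ε (r*ε), hεi]
    have h11b : (ε*(r*ε))*ε = ε*(r*ε) := by
      calc (ε*(r*ε))*ε = ε*((r*ε)*ε) := flex halt₁ halt₂ ε (r*ε)
      _ = ε*(r*(ε*ε)) := by rw [halt₂ ε r]
      _ = ε*(r*ε) := by rw [hεi]
    have hdec : r = ε*(r*ε) + (ε*r - ε*(r*ε)) + (r*ε - ε*(r*ε)) + (r - ε*r - r*ε + ε*(r*ε)) := by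
      abel
    have t11 : T*(ε*(r*ε))*(1-ε) = 0 := by
      rw [mul_sub, mul_one, r1R halt₁ halt₂ ε hεi hTε h11a h11b, sub_self]
    have h12a : ε*(ε*r - ε*(r*ε)) = ε*r - ε*(r*ε) := by
      rw [mul_sub, ← halt₁ ε r, hεi, h11a]
    have h12b : (ε*r - ε*(r*ε))*ε = 0 := by
      rw [sub_mul, hflexr, h11b, sub_self]
    have t12 : T*(ε*r - ε*(r*ε)) = 0 := hTm _ h12a h12b
    have h21a : ε*(r*ε - ε*(r*ε)) = 0 := by rw [mul_sub, h11a, sub_self]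
    have t21 : T*(r*ε - ε*(r*ε)) = 0 := r4 halt₁ halt₂ ε hεi hεT hTε h21a
    have h22a : ε*(r - ε*r - r*ε + ε*(r*ε)) = 0 := by
      rw [mul_add, mul_sub, mul_sub, ← halt₁ ε r, hεi, h11a]
      abel
    have h22b : (r - ε*r - r*ε + ε*(r*ε))*ε = 0 := by
      rw [add_mul, sub_mul, sub_mul, hflexr, h11b, halt₂ ε r, hεi]
      abel
    have t22 : T*(r - ε*r - r*ε + ε*(r*ε)) = 0 := r5 halt₁ halt₂ ε hεi hTε h22a h22b
    calc T*r*(1-ε)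
        = T*(ε*(r*ε) + (ε*r - ε*(r*ε)) + (r*ε - ε*(r*ε)) + (r - ε*r - r*ε + ε*(r*ε)))*(1-ε) := by
          rw [← hdec]
      _ = (T*(ε*(r*ε)) + T*(ε*r - ε*(r*ε)) + T*(r*ε - ε*(r*ε))
            + T*(r - ε*r - r*ε + ε*(r*ε)))*(1-ε) := by
          rw [mul_add, mul_add, mul_add]
      _ = (T*(ε*(r*ε)) + 0 + 0 + 0)*(1-ε) := by rw [t12, t21, t22]
      _ = T*(ε*(r*ε))*(1-ε) := by rw [add_zero, add_zero, add_zero]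
      _ = 0 := t11
  have hfin : Φ (a+b) - (Φ a + Φ b) = 0 := by
    calc Φ (a+b) - (Φ a + Φ b) = Φ (a+b) - Φ a - Φ b := by abel
    _ = T := hT
    _ = 0 := hT0
  exact sub_eq_zero.mp hfin

end lemmas
end SJP
end part4


theorem stmt_8 {A : Type*} [NonAssocRing A] [Module ℂ A]
    [SMulCommClass ℂ A A] [IsScalarTower ℂ A A] [StarRing A]
    (halt₁ : ∀ a b : A, a * a * b = a * (a * b))
    (halt₂ : ∀ a b : A, b * a * a = b * (a * a))
    (e : A) (heStar : star e = e) (heIdem : e * e = e) (he0 : e ≠ 0) (he1 : e ≠ 1)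
    (hsp : ∀ x : A, (∀ r : A, x * r * e = 0) → x = 0)
    (hcl : ∀ x : A, (∀ r : A, x * r * (1 - e) = 0) → x = 0)
    (n : ℕ) (hn : 2 ≤ n) (Φ : A → A)
    (hΦ : ∀ x y : A,
      Φ (leftStarJordan (List.ofFn (lastTwoFamily n x y))) =
        ∑ k : Fin n, leftStarJordan (List.ofFn
          (Function.update (lastTwoFamily n x y) k (Φ (lastTwoFamily n x y k))))) :
    ∀ i : Fin 2, ∀ a b : A, inPeirce e i i a → inPeirce e i i b →
      Φ (a + b) = Φ a + Φ b := by
  obtain ⟨N, rfl⟩ : ∃ N, n = N + 2 := ⟨n - 2, by omega⟩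
  have hK : (2^N : ℕ) ≠ 0 := pow_ne_zero N (by norm_num)
  have hE : ∀ x y : A, Φ (2^N • starJordan x y)
      = SJP.gg Φ N x y + 2^N • starJordan (Φ x) y + 2^N • starJordan x (Φ y) :=
    fun x y => SJP.keyE N Φ hΦ x y
  have hgx : ∀ x x' y : A, SJP.gg Φ N (x + x') y = SJP.gg Φ N x y + SJP.gg Φ N x' y :=
    fun x x' y => SJP.gg_add_left Φ N x x' y
  have hgy : ∀ x y y' : A, SJP.gg Φ N x (y + y') = SJP.gg Φ N x y + SJP.gg Φ N x y' :=
    fun x y y' => SJP.gg_add_right Φ N x y y'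
  intro i a b hA hB
  obtain ⟨hA1, hA2⟩ := hA
  obtain ⟨hB1, hB2⟩ := hB
  fin_cases i
  · -- i = 0 : the Peirce idempotent is e
    simp only [peirceIdem, Fin.isValue, if_pos rfl, reduceIte] at hA1 hA2 hB1 hB2
    exact SJP.lemA11 Φ (SJP.gg Φ N) (2^N) hK hE hgx hgy halt₁ halt₂ e heStar heIdem
      hcl a b hA1 hA2 hB1 hB2
  · -- i = 1 : the Peirce idempotent is 1 - e
    simp only [peirceIdem, Fin.isValue, reduceIte] at hA1 hA2 hB1 hB2
    have hεs : star (1-e) = 1-e := by rw [star_sub, star_one, heStar]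
    have hεi : (1-e)*(1-e) = 1-e := by
      rw [mul_sub, mul_one, sub_mul, one_mul, heIdem]
      abel
    have hcl2 : ∀ x : A, (∀ r : A, x * r * (1 - (1-e)) = 0) → x = 0 := by
      intro x hx
      apply hsp x
      intro r
      have h := hx r
      rwa [sub_sub_cancel] at h
    exact SJP.lemA11 Φ (SJP.gg Φ N) (2^N) hK hE hgx hgy halt₁ halt₂ (1-e) hεs hεi
      hcl2 a b hA1 hA2 hB1 hB2
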